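/- Let a_{ij} : ℝⁿ × ℝ → ℝ satisfy Σ_{i,j=1}^n a_{ij}(x,ζ) ξ_i ξ_j > 0 for all x ∈ ℝⁿ, ζ ∈ ℝ∖{0}, ξ ∈ ℝⁿ∖{0}, let f : ℝⁿ × ℝ × ℝⁿ → ℝ be arbitrary, and let ω ≠ ∅ be a bounded open subset of ℝⁿ × (0,∞) such that a given continuous function u is strictly positive on ω ∪ γ(ω). Write L = Σ_{i,j=1}^n a_{ij}(x, u(x,t)) ∂²/∂x_i∂x_j. Suppose v and w are continuous on the closure of ω, have two continuous x-derivatives and one continuous t-derivative on ω ∪ γ(ω), and satisfy L v − v_t − f(x, u, Dv) ≥ L w − w_t − f(x, u, Dw) on ω ∪ γ(ω) and v ≤ w on the proper boundary Γ(ω). Then v ≤ w on ω ∪ γ(ω). -/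

import Mathlib

open Set Filter Metric

noncomputable section

/-- `n`-dimensional Euclidean space. -/
abbrev Eucl (n : ℕ) := EuclideanSpace ℝ (Fin n)

/-- The upper lid `γ(Ω)` of a set `Ω ⊆ ℝⁿ × ℝ`: points `(x,t)` for which there are
`r > 0` and `ε > 0` with `B_r(x) × (t−ε, t) ⊆ Ω` and `(B_r(x) × (t, t+ε)) ∩ Ω = ∅`. -/
def upperLid {n : ℕ} (Ω : Set (Eucl n × ℝ)) : Set (Eucl n × ℝ) :=
  {q | ∃ r > (0 : ℝ), ∃ ε > (0 : ℝ),
    (ball q.1 r ×ˢ Ioo (q.2 - ε) q.2) ⊆ Ω ∧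
    (ball q.1 r ×ˢ Ioo q.2 (q.2 + ε)) ∩ Ω = ∅}

/-- The proper (parabolic) boundary `Γ(Ω) = ∂Ω ∖ γ(Ω)`. -/
def properBoundary {n : ℕ} (Ω : Set (Eucl n × ℝ)) : Set (Eucl n × ℝ) :=
  frontier Ω \ upperLid Ω

section AuxComparison
open Topology


lemma eucl_norm_le {n : ℕ} {x y : Eucl n} (h : ∀ i, |x i| ≤ |y i|) : ‖x‖ ≤ ‖y‖ := by
  rw [EuclideanSpace.norm_eq, EuclideanSpace.norm_eq]
  apply Real.sqrt_le_sqrt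
  apply Finset.sum_le_sum
  intro i _
  simp only [Real.norm_eq_abs]
  exact pow_le_pow_left₀ (abs_nonneg _) (h i) 2

lemma eucl_abs_le {n : ℕ} (x : Eucl n) (i : Fin n) : |x i| ≤ ‖x‖ := by
  rw [EuclideanSpace.norm_eq]
  have h1 : |x i| = Real.sqrt (‖x i‖ ^ 2) := by
    rw [Real.norm_eq_abs, Real.sqrt_sq_eq_abs, abs_abs]
  rw [h1]
  apply Real.sqrt_le_sqrt
  exact Finset.single_le_sum (f := fun j => ‖x j‖ ^ 2) (fun j _ => by positivity) (Finset.mem_univ i)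

lemma eucl_ext {n : ℕ} {x y : Eucl n} (h : ∀ i, x i = y i) : x = y := PiLp.ext h

def gradCLM {n : ℕ} {F : Type*} [NormedAddCommGroup F] [NormedSpace ℝ F]
    (c : Fin n → F) : Eucl n →L[ℝ] F :=
  ∑ i, (EuclideanSpace.proj i).smulRight (c i)

lemma gradCLM_apply {n : ℕ} {F : Type*} [NormedAddCommGroup F] [NormedSpace ℝ F]
    (c : Fin n → F) (h : Eucl n) : gradCLM c h = ∑ i, h i • c i := by
  simp [gradCLM, ContinuousLinearMap.sum_apply]

lemma hasFDerivAt_of_partials {n : ℕ} {F : Type*} [NormedAddCommGroup F] [NormedSpace ℝ F]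
    {g : Eucl n → F} {p : Fin n → Eucl n → F} {x₀ : Eucl n} {U : Set (Eucl n)}
    (hU : IsOpen U) (hx₀ : x₀ ∈ U)
    (hpart : ∀ x ∈ U, ∀ i, HasDerivAt
      (fun s : ℝ => g (x + s • EuclideanSpace.single i (1:ℝ))) (p i x) 0)
    (hcont : ∀ i, ContinuousAt (p i) x₀) :
    HasFDerivAt g (gradCLM (fun i => p i x₀)) x₀ := by
  rcases Nat.eq_zero_or_pos n with hn | hn
  · subst hn
    rw [hasFDerivAt_iff_isLittleO_nhds_zero, Asymptotics.isLittleO_iff]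
    intro c hc
    filter_upwards with h
    have : h = 0 := Subsingleton.elim h 0
    subst this
    simp
  rw [hasFDerivAt_iff_isLittleO_nhds_zero, Asymptotics.isLittleO_iff]
  intro c hc
  set ε' : ℝ := c / n with hε'def
  have hε' : 0 < ε' := div_pos hc (by exact_mod_cast hn)
  have hev : ∀ᶠ z in 𝓝 x₀, z ∈ U ∧ ∀ i, ‖p i z - p i x₀‖ ≤ ε' := by
    have h1 : ∀ᶠ z in 𝓝 x₀, ∀ i, ‖p i z - p i x₀‖ ≤ ε' := by
      rw [eventually_all]
      intro i
      have := Metric.tendsto_nhds.mp (hcont i) ε' hε'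
      filter_upwards [this] with z hz
      rw [dist_eq_norm] at hz
      exact hz.le
    filter_upwards [hU.mem_nhds hx₀, h1] with z h2 h3 using ⟨h2, h3⟩
  obtain ⟨δ, hδ, hδball⟩ := Metric.eventually_nhds_iff_ball.mp hev
  filter_upwards [ball_mem_nhds (0 : Eucl n) hδ] with h hh
  have hhδ : ‖h‖ < δ := by simpa using hh
  set e : Fin n → Eucl n := fun i => EuclideanSpace.single i (1:ℝ) with he
  set c' : ℕ → Eucl n := fun k => if hk : k < n then h ⟨k, hk⟩ • e ⟨k, hk⟩ else 0 with hc'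
  set S : ℕ → Eucl n := fun k => ∑ i ∈ Finset.range k, c' i with hS
  set y : ℕ → Eucl n := fun k => x₀ + S k with hy
  have hc'coord : ∀ (k : ℕ) (hk : k < n) (j : Fin n),
      (c' k) j = if (j : ℕ) = k then h j else 0 := by
    intro k hk j
    by_cases hj : (j:ℕ) = k
    · have hj' : j = ⟨k, hk⟩ := Fin.ext hj
      subst hj'
      simp [hc', dif_pos hk, he]
    · have hj' : j ≠ ⟨k, hk⟩ := fun hc2 => hj (by rw [hc2])
      simp [hc', dif_pos hk, he, PiLp.smul_apply, EuclideanSpace.single_apply, hj, hj']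
  have hScoord : ∀ (k : ℕ) (j : Fin n), (S k) j = if (j : ℕ) < k then h j else 0 := by
    intro k
    induction k with
    | zero => intro j; simp [hS]
    | succ m ih =>
      intro j
      have hstep : S (m+1) = S m + c' m := by
        simp only [hS]
        rw [Finset.sum_range_succ]
      rw [hstep, PiLp.add_apply, ih]
      have hj2 : (j:ℕ) < n := j.isLt
      by_cases hm : m < n
      · rw [hc'coord m hm]
        rcases lt_trichotomy (j:ℕ) m with h1 | h1 | h1
        · rw [if_pos h1, if_neg (by omega), if_pos (by omega), add_zero]
        · rw [if_neg (by omega), if_pos h1, if_pos (by omega), zero_add]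
        · rw [if_neg (by omega), if_neg (by omega), if_neg (by omega), add_zero]
      · have hc0 : c' m = 0 := by simp [hc', dif_neg hm]
        rw [hc0, PiLp.zero_apply, add_zero, if_pos (by omega), if_pos (by omega)]
  have hmem : ∀ (k : ℕ) (s : ℝ), s ∈ Icc (0:ℝ) 1 →
      (y k + s • c' k) ∈ U ∧ ∀ i, ‖p i (y k + s • c' k) - p i x₀‖ ≤ ε' := by
    intro k s hs
    apply hδball
    have hcoord : ∀ j : Fin n, |(y k + s • c' k - x₀) j| ≤ |h j| := by
      intro j
      have hrw : y k + s • c' k - x₀ = S k + s • c' k := by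
        simp only [hy]; abel
      rw [hrw, PiLp.add_apply, PiLp.smul_apply, hScoord, smul_eq_mul]
      by_cases hk : k < n
      · rw [hc'coord k hk]
        rcases lt_trichotomy (j:ℕ) k with h1 | h1 | h1
        · rw [if_pos h1, if_neg (by omega), mul_zero, add_zero]
        · rw [if_neg (by omega), if_pos h1, zero_add]
          calc |s * h j| = |s| * |h j| := abs_mul _ _
            _ ≤ 1 * |h j| := by
                apply mul_le_mul_of_nonneg_right _ (abs_nonneg _)
                rw [abs_le]; exact ⟨by linarith [hs.1], hs.2⟩
            _ = |h j| := one_mul _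
        · rw [if_neg (by omega), if_neg (by omega), mul_zero, add_zero]
          simp
      · have hc0 : c' k = 0 := by simp [hc', dif_neg hk]
        have hj2 : (j:ℕ) < n := j.isLt
        rw [hc0]
        have hz0 : (0 : Eucl n) j = 0 := rfl
        rw [hz0, mul_zero, add_zero, if_pos (by omega)]
    have hnle : ‖y k + s • c' k - x₀‖ ≤ ‖h‖ := eucl_norm_le hcoord
    rw [mem_ball, dist_eq_norm]
    exact lt_of_le_of_lt hnle hhδ
  set P : ℕ → F := fun k => if hk : k < n then h ⟨k, hk⟩ • p ⟨k, hk⟩ x₀ else 0 with hP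
  have hstep : ∀ k < n, ‖g (y (k+1)) - g (y k) - P k‖ ≤ ε' * ‖h‖ := by
    intro k hk
    set i : Fin n := ⟨k, hk⟩ with hi
    have hck : c' k = h i • e i := by simp [hc', dif_pos hk, hi]
    have hPk : P k = h i • p i x₀ := by simp [hP, dif_pos hk, hi]
    set ψ : ℝ → F := fun s => g (y k + s • c' k) - s • P k with hψ
    have hderiv : ∀ s ∈ Icc (0:ℝ) 1,
        HasDerivWithinAt ψ (h i • p i (y k + s • c' k) - P k) (Icc 0 1) s := by
      intro s hs
      set z := y k + s • c' k with hz
      have hzU : z ∈ U := (hmem k s hs).1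
      have houter := hpart z hzU i
      have hinner : HasDerivAt (fun τ : ℝ => (τ - s) * h i) (h i) s := by
        simpa using ((hasDerivAt_id s).sub_const s).mul_const (h i)
      have h1 : HasDerivAt (fun τ : ℝ => g (y k + τ • c' k)) (h i • p i z) s := by
        have hcomp := HasDerivAt.scomp (x := s) (by simpa using houter) hinner
        convert hcomp using 1
        funext τ
        simp only [Function.comp]
        have hpt : z + ((τ - s) * h i) • EuclideanSpace.single i (1:ℝ) = y k + τ • c' k := by
          rw [hz, hck]
          simp only [he]
          module
        rw [hpt]
      have h2 : HasDerivAt (fun τ : ℝ => τ • P k) (P k) s := by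
        simpa using (hasDerivAt_id s).smul_const (P k)
      exact (h1.sub h2).hasDerivWithinAt
    have hbound : ∀ s ∈ Icc (0:ℝ) 1,
        ‖h i • p i (y k + s • c' k) - P k‖ ≤ ε' * ‖h‖ := by
      intro s hs
      rw [hPk, ← smul_sub, norm_smul]
      have hb1 : ‖p i (y k + s • c' k) - p i x₀‖ ≤ ε' := (hmem k s hs).2 i
      have hb2 : ‖h i‖ ≤ ‖h‖ := by rw [Real.norm_eq_abs]; exact eucl_abs_le h i
      calc ‖h i‖ * ‖p i (y k + s • c' k) - p i x₀‖ ≤ ‖h‖ * ε' :=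
        mul_le_mul hb2 hb1 (norm_nonneg _) (norm_nonneg _)
      _ = ε' * ‖h‖ := mul_comm _ _
    have hmvt := Convex.norm_image_sub_le_of_norm_hasDerivWithin_le hderiv hbound
      (convex_Icc 0 1) (Set.left_mem_Icc.2 zero_le_one) (Set.right_mem_Icc.2 zero_le_one)
    have hyk1 : y (k+1) = y k + c' k := by
      simp only [hy, hS]
      rw [Finset.sum_range_succ]; abel
    have hψ1 : ψ 1 - ψ 0 = g (y (k+1)) - g (y k) - P k := by
      simp only [hψ, one_smul, zero_smul, smul_zero, sub_zero, add_zero]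
      rw [← hyk1]; abel
    rw [hψ1] at hmvt
    simpa using hmvt
  have hyn : y n = x₀ + h := by
    have hSn : S n = h := by
      apply eucl_ext
      intro j
      rw [hScoord]
      simp [j.isLt]
    show x₀ + S n = x₀ + h
    rw [hSn]
  have hy0 : y 0 = x₀ := by simp [hy, hS]
  have hLh : gradCLM (fun i => p i x₀) h = ∑ k ∈ Finset.range n, P k := by
    rw [gradCLM_apply]
    rw [← Fin.sum_univ_eq_sum_range P n]
    apply Finset.sum_congr rfl
    intro i _
    simp [hP, dif_pos i.isLt]
  have htele : g (x₀ + h) - g x₀ - gradCLM (fun i => p i x₀) h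
      = ∑ k ∈ Finset.range n, (g (y (k+1)) - g (y k) - P k) := by
    rw [Finset.sum_sub_distrib, Finset.sum_range_sub (fun k => g (y k)), hyn, hy0, hLh]
  rw [htele]
  calc ‖∑ k ∈ Finset.range n, (g (y (k+1)) - g (y k) - P k)‖
      ≤ ∑ k ∈ Finset.range n, ‖g (y (k+1)) - g (y k) - P k‖ := norm_sum_le _ _
    _ ≤ ∑ _k ∈ Finset.range n, (ε' * ‖h‖) := by
        apply Finset.sum_le_sum
        intro k hkmem
        exact hstep k (Finset.mem_range.mp hkmem)
    _ = n * (ε' * ‖h‖) := by rw [Finset.sum_const, Finset.card_range]; simp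
    _ = c * ‖h‖ := by
        rw [hε'def]
        field_simp

lemma trace_nonpos {n : ℕ} (A M : Fin n → Fin n → ℝ)
    (hA : ∀ ξ : Eucl n, ξ ≠ 0 → 0 < ∑ i, ∑ j, A i j * ξ i * ξ j)
    (hM : ∀ ξ : Eucl n, ∑ i, ∑ j, M i j * ξ i * ξ j ≤ 0)
    (hsym : ∀ i j, M i j = M j i) :
    ∑ i, ∑ j, A i j * M i j ≤ 0 := by
  classical
  set N : Matrix (Fin n) (Fin n) ℝ := Matrix.of (fun i j => - M i j) with hN
  have hNapp : ∀ i j, N i j = - M i j := fun i j => rfl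
  have hpsd : N.PosSemidef := by
    rw [Matrix.posSemidef_iff_dotProduct_mulVec]
    constructor
    · ext i j
      simp only [Matrix.conjTranspose_apply, hNapp, star_trivial, neg_inj]
      exact hsym j i
    · intro x
      set ξ : Eucl n := (WithLp.equiv 2 (Fin n → ℝ)).symm x with hξdef
      have hξ : ∀ i, ξ i = x i := fun i => rfl
      have hstar : star x = x := rfl
      have hcalc : dotProduct (star x) (N.mulVec x)
          = ∑ i, ∑ j, (- M i j) * ξ i * ξ j := by
        calc dotProduct (star x) (N.mulVec x)
            = ∑ i, x i * (∑ j, N i j * x j) := by rw [hstar]; rfl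
          _ = ∑ i, ∑ j, (- M i j) * ξ i * ξ j := by
              apply Finset.sum_congr rfl
              intro i _
              rw [Finset.mul_sum]
              apply Finset.sum_congr rfl
              intro j _
              rw [hNapp, hξ, hξ]
              ring
      rw [hcalc]
      have h1 := hM ξ
      have h2 : ∑ i, ∑ j, (- M i j) * ξ i * ξ j
          = - ∑ i, ∑ j, M i j * ξ i * ξ j := by
        rw [← Finset.sum_neg_distrib]
        apply Finset.sum_congr rfl
        intro i _
        rw [← Finset.sum_neg_distrib]
        apply Finset.sum_congr rfl
        intro j _
        ring
      rw [h2]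
      linarith
  open scoped MatrixOrder Matrix.Norms.L2Operator in
  obtain ⟨B, hB⟩ := CStarAlgebra.nonneg_iff_eq_star_mul_self.mp hpsd.nonneg
  have hNentry : ∀ i j, N i j = ∑ k, B k i * B k j := by
    intro i j
    rw [hB]
    simp [Matrix.mul_apply, Matrix.conjTranspose_apply]
  have hkey : 0 ≤ ∑ i, ∑ j, A i j * N i j := by
    have hc1 : ∑ i, ∑ j, A i j * N i j
        = ∑ k, ∑ i, ∑ j, A i j * (B k i * B k j) := by
      calc ∑ i, ∑ j, A i j * N i j
          = ∑ i, ∑ j, ∑ k, A i j * (B k i * B k j) := by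
            apply Finset.sum_congr rfl
            intro i _
            apply Finset.sum_congr rfl
            intro j _
            rw [hNentry, Finset.mul_sum]
        _ = ∑ i, ∑ k, ∑ j, A i j * (B k i * B k j) := by
            apply Finset.sum_congr rfl
            intro i _
            exact Finset.sum_comm
        _ = ∑ k, ∑ i, ∑ j, A i j * (B k i * B k j) := Finset.sum_comm
    rw [hc1]
    apply Finset.sum_nonneg
    intro k _
    by_cases hzero : ∀ i, B k i = 0
    · apply le_of_eq
      symm
      apply Finset.sum_eq_zero
      intro i _
      apply Finset.sum_eq_zero
      intro j _
      rw [hzero i]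
      ring
    · push_neg at hzero
      set ξk : Eucl n := (WithLp.equiv 2 (Fin n → ℝ)).symm (fun i => B k i) with hξkdef
      have hξk : ∀ i, ξk i = B k i := fun i => rfl
      have hne : ξk ≠ 0 := by
        intro hcontra
        obtain ⟨i0, hi0⟩ := hzero
        apply hi0
        have h0 : ξk i0 = 0 := by rw [hcontra]; rfl
        rw [← hξk i0]
        exact h0
      have hpos := hA ξk hne
      apply le_of_lt
      calc (0:ℝ) < ∑ i, ∑ j, A i j * ξk i * ξk j := hpos
        _ = ∑ i, ∑ j, A i j * (B k i * B k j) := by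
            apply Finset.sum_congr rfl
            intro i _
            apply Finset.sum_congr rfl
            intro j _
            rw [hξk, hξk]
            ring
  have hfin : ∑ i, ∑ j, A i j * M i j = - ∑ i, ∑ j, A i j * N i j := by
    rw [← Finset.sum_neg_distrib]
    apply Finset.sum_congr rfl
    intro i _
    rw [← Finset.sum_neg_distrib]
    apply Finset.sum_congr rfl
    intro j _
    rw [hNapp]; ring
  rw [hfin]
  linarith

lemma deriv_nonneg_of_left_max {h : ℝ → ℝ} {D t ε : ℝ} (hε : 0 < ε)
    (hd : HasDerivAt h D t) (hmax : ∀ τ ∈ Ioc (t - ε) t, h τ ≤ h t) : 0 ≤ D := by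
  have hs := hasDerivAt_iff_tendsto_slope.mp hd
  have h2 : Tendsto (slope h t) (𝓝[<] t) (𝓝 D) :=
    hs.mono_left (nhdsWithin_mono t (fun x hx => ne_of_lt hx))
  apply ge_of_tendsto h2
  filter_upwards [Ioo_mem_nhdsLT (show t - ε < t by linarith)] with τ hτ
  rw [slope_def_field]
  rw [show (h τ - h t) / (τ - t) = (-(h τ - h t)) / (-(τ - t)) by rw [neg_div_neg_eq]]
  apply div_nonneg
  · have := hmax τ ⟨hτ.1, hτ.2.le⟩
    linarith
  · have := hτ.2
    linarith

lemma second_order_test {n : ℕ} {G : Eucl n → ℝ} {p : Fin n → Eucl n → ℝ}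
    {q : Fin n → Fin n → Eucl n → ℝ} {x₀ : Eucl n} {r : ℝ} (hr : 0 < r)
    (hpart : ∀ x ∈ ball x₀ r, ∀ i, HasDerivAt
      (fun s : ℝ => G (x + s • EuclideanSpace.single i (1:ℝ))) (p i x) 0)
    (hpcont : ∀ i, ContinuousOn (p i) (ball x₀ r))
    (hqpart : ∀ x ∈ ball x₀ r, ∀ i j, HasDerivAt
      (fun s : ℝ => p i (x + s • EuclideanSpace.single j (1:ℝ))) (q i j x) 0)
    (hqcont : ∀ i j, ContinuousOn (q i j) (ball x₀ r))
    (hmax : ∀ x ∈ ball x₀ r, G x ≤ G x₀) :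
    (∀ i, p i x₀ = 0) ∧
      (∀ ξ : Eucl n, ∑ i, ∑ j, q i j x₀ * ξ i * ξ j ≤ 0) ∧
      (∀ i j, q i j x₀ = q j i x₀) := by
  have hx₀ : x₀ ∈ ball x₀ r := mem_ball_self hr
  -- first order conditions
  have hfirst : ∀ i, p i x₀ = 0 := by
    intro i
    apply IsLocalMax.hasDerivAt_eq_zero _ (by simpa using hpart x₀ hx₀ i)
    have hcont : Continuous (fun s : ℝ => x₀ + s • EuclideanSpace.single i (1:ℝ)) := by
      continuity
    have hmem : ∀ᶠ s : ℝ in 𝓝 0, x₀ + s • EuclideanSpace.single i (1:ℝ) ∈ ball x₀ r := by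
      have := hcont.tendsto 0
      apply this
      simpa using isOpen_ball.mem_nhds hx₀
    filter_upwards [hmem] with s hs
    have h0 : G (x₀ + (0:ℝ) • EuclideanSpace.single i (1:ℝ)) = G x₀ := by simp
    calc G (x₀ + s • EuclideanSpace.single i (1:ℝ)) ≤ G x₀ := hmax _ hs
      _ = G (x₀ + (0:ℝ) • EuclideanSpace.single i (1:ℝ)) := h0.symm
  -- Frechet derivative machinery
  have hG' : ∀ z ∈ ball x₀ r, HasFDerivAt G (gradCLM (fun i => p i z)) z := by
    intro z hz
    exact hasFDerivAt_of_partials isOpen_ball hz hpart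
      (fun i => (hpcont i).continuousAt (isOpen_ball.mem_nhds hz))
  have hp' : ∀ i, HasFDerivAt (p i) (gradCLM (fun j => q i j x₀)) x₀ := by
    intro i
    exact hasFDerivAt_of_partials isOpen_ball hx₀ (fun x hx j => hqpart x hx i j)
      (fun j => (hqcont i j).continuousAt (isOpen_ball.mem_nhds hx₀))
  have hlineD : ∀ (ξ : Eucl n) (s : ℝ), HasDerivAt (fun σ : ℝ => x₀ + σ • ξ) ξ s := by
    intro ξ s
    simpa using ((hasDerivAt_id s).smul_const ξ).const_add x₀
  -- symmetry of second derivatives via Schwarz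
  have hsym : ∀ i j, q i j x₀ = q j i x₀ := by
    intro i0 j0
    classical
    set A : (Fin n → ℝ) →L[ℝ] (Eucl n →L[ℝ] ℝ) :=
      ∑ i, (ContinuousLinearMap.proj i).smulRight (EuclideanSpace.proj i) with hA
    have hAapp : ∀ (c : Fin n → ℝ) (hvec : Eucl n), A c hvec = ∑ i, c i * hvec i := by
      intro c hvec
      rw [hA]
      rw [ContinuousLinearMap.sum_apply, ContinuousLinearMap.sum_apply]
      apply Finset.sum_congr rfl
      intro i _
      simp
    have hfeq : (fun z => gradCLM (fun i => p i z)) = fun z => A (fun i => p i z) := by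
      funext z
      apply ContinuousLinearMap.ext
      intro hvec
      rw [gradCLM_apply, hAapp]
      apply Finset.sum_congr rfl
      intro i _
      rw [smul_eq_mul, mul_comm]
    set Φ : Eucl n →L[ℝ] (Fin n → ℝ) :=
      ContinuousLinearMap.pi (fun i => gradCLM (fun j => q i j x₀)) with hΦ
    have hPd : HasFDerivAt (fun z => (fun i => p i z)) Φ x₀ := by
      apply hasFDerivAt_pi''
      intro i
      rw [hΦ, ContinuousLinearMap.proj_pi]
      exact hp' i
    have hf' : HasFDerivAt (fun z => gradCLM (fun i => p i z)) (A.comp Φ) x₀ := by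
      rw [hfeq]
      exact (A.hasFDerivAt).comp x₀ hPd
    have hev : ∀ᶠ z in 𝓝 x₀, HasFDerivAt G (gradCLM (fun i => p i z)) z := by
      filter_upwards [isOpen_ball.mem_nhds hx₀] with z hz using hG' z hz
    have hsch := second_derivative_symmetric_of_eventually hev hf'
    have heval : ∀ (ξ η : Eucl n), (A.comp Φ) ξ η = ∑ i, (∑ j, ξ j * q i j x₀) * η i := by
      intro ξ η
      rw [ContinuousLinearMap.comp_apply, hAapp]
      apply Finset.sum_congr rfl
      intro i _
      congr 1
      rw [hΦ]
      rw [show (ContinuousLinearMap.pi (fun i => gradCLM (fun j => q i j x₀))) ξ i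
            = gradCLM (fun j => q i j x₀) ξ from rfl]
      rw [gradCLM_apply]
      apply Finset.sum_congr rfl
      intro j _
      rw [smul_eq_mul]
    have h1 := hsch (EuclideanSpace.single j0 (1:ℝ)) (EuclideanSpace.single i0 (1:ℝ))
    rw [heval, heval] at h1
    simpa [EuclideanSpace.single_apply, Finset.mul_sum, mul_ite, ite_mul,
      Finset.sum_ite_eq', Finset.sum_ite_eq] using h1
  -- the quadratic form condition
  have hquad : ∀ ξ : Eucl n, ∑ i, ∑ j, q i j x₀ * ξ i * ξ j ≤ 0 := by
    intro ξ
    by_contra hcon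
    push_neg at hcon
    set c : ℝ := ∑ i, ∑ j, q i j x₀ * ξ i * ξ j with hc
    set ρ : ℝ := r / (‖ξ‖ + 1) with hρdef
    have hρ : 0 < ρ := div_pos hr (by positivity)
    have hline : ∀ s : ℝ, |s| < ρ → x₀ + s • ξ ∈ ball x₀ r := by
      intro s hs
      rw [mem_ball, dist_eq_norm]
      have h0 : x₀ + s • ξ - x₀ = s • ξ := by abel
      rw [h0, norm_smul, Real.norm_eq_abs]
      have h1 : |s| * ‖ξ‖ ≤ |s| * (‖ξ‖ + 1) := by nlinarith [abs_nonneg s, norm_nonneg ξ]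
      have h2 : |s| * (‖ξ‖ + 1) < ρ * (‖ξ‖ + 1) :=
        mul_lt_mul_of_pos_right hs (by positivity)
      have h3 : ρ * (‖ξ‖ + 1) = r := by
        rw [hρdef]
        field_simp
      linarith
    set ψ : ℝ → ℝ := fun s => ∑ i, ξ i * p i (x₀ + s • ξ) with hψ
    have hφD : ∀ s : ℝ, |s| < ρ → HasDerivAt (fun σ => G (x₀ + σ • ξ)) (ψ s) s := by
      intro s hs
      have hz := hline s hs
      have h3 : HasDerivAt (fun σ => G (x₀ + σ • ξ))
          (gradCLM (fun i => p i (x₀ + s • ξ)) ξ) s :=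
        (hG' _ hz).comp_hasDerivAt s (hlineD ξ s)
      have hval : gradCLM (fun i => p i (x₀ + s • ξ)) ξ = ψ s := by
        rw [gradCLM_apply, hψ]
        apply Finset.sum_congr rfl
        intro i _
        rw [smul_eq_mul]
      rw [← hval]
      exact h3
    have hψD : HasDerivAt ψ c 0 := by
      have hterm : ∀ i : Fin n, HasDerivAt (fun s : ℝ => ξ i * p i (x₀ + s • ξ))
          (ξ i * (∑ j, ξ j * q i j x₀)) 0 := by
        intro i
        have hp'' : HasFDerivAt (p i) (gradCLM fun j => q i j x₀) (x₀ + (0:ℝ) • ξ) := by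
          have heq0 : x₀ + (0:ℝ) • ξ = x₀ := by simp
          rw [heq0]
          exact hp' i
        have h1 : HasDerivAt (fun s : ℝ => p i (x₀ + s • ξ))
            (gradCLM (fun j => q i j x₀) ξ) 0 :=
          hp''.comp_hasDerivAt 0 (hlineD ξ 0)
        have hval : gradCLM (fun j => q i j x₀) ξ = ∑ j, ξ j * q i j x₀ := by
          rw [gradCLM_apply]
          apply Finset.sum_congr rfl
          intro j _
          rw [smul_eq_mul]
        rw [hval] at h1
        exact h1.const_mul (ξ i)
      have hsum := HasDerivAt.fun_sum (u := Finset.univ) (fun i _ => hterm i)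
      have hceq : c = ∑ i, ξ i * (∑ j, ξ j * q i j x₀) := by
        rw [hc]
        apply Finset.sum_congr rfl
        intro i _
        rw [Finset.mul_sum]
        apply Finset.sum_congr rfl
        intro j _
        ring
      rw [hψ, hceq]
      exact hsum
    have hψ0 : ψ 0 = 0 := by
      rw [hψ]
      simp only [zero_smul, add_zero]
      apply Finset.sum_eq_zero
      intro i _
      rw [hfirst i, mul_zero]
    have hslope : Tendsto (fun s => ψ s / s) (𝓝[>] (0:ℝ)) (𝓝 c) := by
      have h1 := hasDerivAt_iff_tendsto_slope.mp hψD
      have h2 := h1.mono_left (nhdsWithin_mono (0:ℝ) (fun x hx => ne_of_gt hx))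
      apply h2.congr
      intro s
      rw [slope_def_field, hψ0, sub_zero, sub_zero]
    have hev2 : ∀ᶠ s in 𝓝[>] (0:ℝ), c/2 < ψ s / s ∧ s < ρ := by
      filter_upwards [hslope.eventually (eventually_gt_nhds (by linarith : c/2 < c)),
        Ioo_mem_nhdsGT hρ] with s h1 h2
      exact ⟨h1, h2.2⟩
    obtain ⟨a, ha, hIoc⟩ := mem_nhdsGT_iff_exists_Ioc_subset.mp hev2
    have ha0 : (0:ℝ) < a := ha
    have haρ : a < ρ := (hIoc ⟨ha0, le_refl a⟩).2
    set φ : ℝ → ℝ := fun σ => G (x₀ + σ • ξ) with hφ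
    have hφdiff : ∀ s ∈ Icc (0:ℝ) a, |s| < ρ := by
      intro s hs
      rw [abs_of_nonneg hs.1]
      exact lt_of_le_of_lt hs.2 haρ
    have hφcont : ContinuousOn φ (Icc 0 a) := by
      intro s hs
      exact ((hφD s (hφdiff s hs)).continuousAt).continuousWithinAt
    have hmono : StrictMonoOn φ (Icc 0 a) := by
      apply strictMonoOn_of_deriv_pos (convex_Icc 0 a) hφcont
      intro s hs
      rw [interior_Icc] at hs
      have hd := hφD s (hφdiff s ⟨hs.1.le, hs.2.le⟩)
      rw [hd.deriv]
      have hmem2 := (hIoc ⟨hs.1, hs.2.le⟩).1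
      have hs0 : 0 < s := hs.1
      have h5 : c/2 * s < ψ s := (lt_div_iff₀ hs0).mp hmem2
      nlinarith
    have hlt := hmono (left_mem_Icc.mpr ha0.le) (right_mem_Icc.mpr ha0.le) ha0
    have hφ0 : φ 0 = G x₀ := by
      rw [hφ]
      simp
    have hfin : φ a ≤ G x₀ := by
      apply hmax
      apply hline
      rw [abs_of_pos ha0]
      exact haρ
    rw [hφ0] at hlt
    linarith
  exact ⟨hfirst, hquad, hsym⟩

lemma mem_closure_of_cyl {n : ℕ} {s : Set (Eucl n × ℝ)} {x₀ x : Eucl n} {t r ε : ℝ}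
    (hr : 0 < r) (hε : 0 < ε) (hcyl : ball x₀ r ×ˢ Ioo (t - ε) t ⊆ s)
    (hx : x ∈ closure (ball x₀ r)) : ((x, t) : Eucl n × ℝ) ∈ closure s := by
  apply closure_mono hcyl
  rw [closure_prod_eq]
  refine ⟨hx, ?_⟩
  rw [closure_Ioo (by linarith : t - ε ≠ t)]
  exact ⟨by linarith, le_refl t⟩


end AuxComparison

/-- **Lemma 3.1** (comparison principle). If `Lv − v_t − f(x,u,Dv) ≥ Lw − w_t − f(x,u,Dw)`
on `ω ∪ γ(ω)` and `v ≤ w` on `Γ(ω)`, where `ω ≠ ∅` is a bounded open subset of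
`ℝⁿ × (0,∞)` on which the continuous function `u` is positive, then `v ≤ w` on `ω ∪ γ(ω)`. -/
theorem comparison_principle
    (n : ℕ) (hn : 1 ≤ n)
    (a : Eucl n → ℝ → Fin n → Fin n → ℝ)
    (f : Eucl n → ℝ → Eucl n → ℝ)
    (hell : ∀ (x : Eucl n) (ζ : ℝ), ζ ≠ 0 → ∀ ξ : Eucl n, ξ ≠ 0 →
      0 < ∑ i, ∑ j, a x ζ i j * ξ i * ξ j)
    (u : Eucl n → ℝ → ℝ)
    (hu_cont : ContinuousOn (fun q : Eucl n × ℝ => u q.1 q.2) (univ ×ˢ Ioi 0))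
    (ω : Set (Eucl n × ℝ))
    (hω_ne : ω.Nonempty) (hω_open : IsOpen ω) (hω_bdd : Bornology.IsBounded ω)
    (hω_sub : ∀ q ∈ ω, (0 : ℝ) < q.2)
    (hu_pos : ∀ q ∈ ω ∪ upperLid ω, 0 < u q.1 q.2)
    -- `v` and its derivatives
    (v : Eucl n → ℝ → ℝ) (dv : Eucl n → ℝ → Eucl n)
    (d2v : Eucl n → ℝ → Fin n → Fin n → ℝ) (vt : Eucl n → ℝ → ℝ)
    (hv_cont : ContinuousOn (fun q : Eucl n × ℝ => v q.1 q.2) (closure ω))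
    (hdv : ∀ q ∈ ω ∪ upperLid ω, ∀ i, HasDerivAt
      (fun s : ℝ => v (q.1 + s • EuclideanSpace.single i (1 : ℝ)) q.2) (dv q.1 q.2 i) 0)
    (hd2v : ∀ q ∈ ω ∪ upperLid ω, ∀ i j, HasDerivAt
      (fun s : ℝ => dv (q.1 + s • EuclideanSpace.single j (1 : ℝ)) q.2 i) (d2v q.1 q.2 i j) 0)
    (hvt : ∀ q ∈ ω ∪ upperLid ω, HasDerivAt (fun τ : ℝ => v q.1 τ) (vt q.1 q.2) q.2)
    (hdv_cont : ∀ i, ContinuousOn (fun q : Eucl n × ℝ => dv q.1 q.2 i) (ω ∪ upperLid ω))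
    (hd2v_cont : ∀ i j, ContinuousOn (fun q : Eucl n × ℝ => d2v q.1 q.2 i j) (ω ∪ upperLid ω))
    (hvt_cont : ContinuousOn (fun q : Eucl n × ℝ => vt q.1 q.2) (ω ∪ upperLid ω))
    -- `w` and its derivatives
    (w : Eucl n → ℝ → ℝ) (dw : Eucl n → ℝ → Eucl n)
    (d2w : Eucl n → ℝ → Fin n → Fin n → ℝ) (wt : Eucl n → ℝ → ℝ)
    (hw_cont : ContinuousOn (fun q : Eucl n × ℝ => w q.1 q.2) (closure ω))
    (hdw : ∀ q ∈ ω ∪ upperLid ω, ∀ i, HasDerivAt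
      (fun s : ℝ => w (q.1 + s • EuclideanSpace.single i (1 : ℝ)) q.2) (dw q.1 q.2 i) 0)
    (hd2w : ∀ q ∈ ω ∪ upperLid ω, ∀ i j, HasDerivAt
      (fun s : ℝ => dw (q.1 + s • EuclideanSpace.single j (1 : ℝ)) q.2 i) (d2w q.1 q.2 i j) 0)
    (hwt : ∀ q ∈ ω ∪ upperLid ω, HasDerivAt (fun τ : ℝ => w q.1 τ) (wt q.1 q.2) q.2)
    (hdw_cont : ∀ i, ContinuousOn (fun q : Eucl n × ℝ => dw q.1 q.2 i) (ω ∪ upperLid ω))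
    (hd2w_cont : ∀ i j, ContinuousOn (fun q : Eucl n × ℝ => d2w q.1 q.2 i j) (ω ∪ upperLid ω))
    (hwt_cont : ContinuousOn (fun q : Eucl n × ℝ => wt q.1 q.2) (ω ∪ upperLid ω))
    -- the differential inequality `Lv − v_t − f(x,u,Dv) ≥ Lw − w_t − f(x,u,Dw)` on `ω ∪ γ(ω)`
    (hmain : ∀ q ∈ ω ∪ upperLid ω,
      (∑ i, ∑ j, a q.1 (u q.1 q.2) i j * d2w q.1 q.2 i j) - wt q.1 q.2
          - f q.1 (u q.1 q.2) (dw q.1 q.2)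
        ≤ (∑ i, ∑ j, a q.1 (u q.1 q.2) i j * d2v q.1 q.2 i j) - vt q.1 q.2
          - f q.1 (u q.1 q.2) (dv q.1 q.2))
    -- the boundary inequality `v ≤ w` on `Γ(ω)`
    (hbdry : ∀ q ∈ properBoundary ω, v q.1 q.2 ≤ w q.1 q.2) :
    ∀ q ∈ ω ∪ upperLid ω, v q.1 q.2 ≤ w q.1 q.2 := by
  have hclT : ∀ q ∈ closure ω, (0:ℝ) ≤ q.2 := by
    intro q hq
    have h1 : closure ω ⊆ {q : Eucl n × ℝ | 0 ≤ q.2} :=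
      closure_minimal (fun q hqω => (hω_sub q hqω).le)
        (isClosed_le continuous_const continuous_snd)
    exact h1 hq
  have hlid_closure : ∀ q ∈ ω ∪ upperLid ω, q ∈ closure ω := by
    intro q hq
    rcases hq with hq | hq
    · exact subset_closure hq
    · obtain ⟨r, hr, ε, hε, hcyl, _⟩ := hq
      exact mem_closure_of_cyl hr hε hcyl (subset_closure (mem_ball_self hr))
  have key : ∀ σ : ℝ, 0 < σ → ∀ q ∈ closure ω, v q.1 q.2 - w q.1 q.2 ≤ σ * q.2 := by
    intro σ hσ
    by_contra hcon
    push_neg at hcon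
    obtain ⟨q₀, hq₀, hgt⟩ := hcon
    set g : Eucl n × ℝ → ℝ := fun q => v q.1 q.2 - w q.1 q.2 - σ * q.2 with hg
    have hgcont : ContinuousOn g (closure ω) := by
      apply ContinuousOn.sub (hv_cont.sub hw_cont)
      exact (continuous_const.mul continuous_snd).continuousOn
    have hcomp : IsCompact (closure ω) :=
      Metric.isCompact_of_isClosed_isBounded isClosed_closure hω_bdd.closure
    obtain ⟨pmax, hpmem, hpmax⟩ := hcomp.exists_isMaxOn hω_ne.closure hgcont
    have hgpos : 0 < g pmax := by
      have h1 : g q₀ ≤ g pmax := hpmax hq₀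
      have h2 : 0 < g q₀ := by
        simp only [hg]
        linarith
      linarith
    have hpΓ : pmax ∉ properBoundary ω := by
      intro hΓ
      have h1 := hbdry pmax hΓ
      have h2 : 0 ≤ σ * pmax.2 :=
        mul_nonneg hσ.le (hclT _ (frontier_subset_closure hΓ.1))
      have h3 : g pmax ≤ 0 := by
        simp only [hg]
        linarith
      linarith
    have hpm : pmax ∈ ω ∪ upperLid ω := by
      by_cases hpo : pmax ∈ ω
      · exact Or.inl hpo
      · right
        have hfr : pmax ∈ frontier ω := by
          have : pmax ∈ closure ω \ interior ω :=
            ⟨hpmem, fun h => hpo (by rwa [hω_open.interior_eq] at h)⟩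
          exact this
        by_contra hlid
        exact hpΓ ⟨hfr, hlid⟩
    obtain ⟨r, hr, ε, hε, hcyl, hslice⟩ : ∃ r > (0:ℝ), ∃ ε > (0:ℝ),
        (ball pmax.1 r ×ˢ Ioo (pmax.2 - ε) pmax.2 ⊆ ω) ∧
        (∀ x ∈ ball pmax.1 r, ((x, pmax.2) : Eucl n × ℝ) ∈ ω ∪ upperLid ω) := by
      rcases hpm with hpo | hplid
      · obtain ⟨R, hR, hball⟩ := Metric.isOpen_iff.mp hω_open pmax hpo
        refine ⟨R, hR, R, hR, ?_, ?_⟩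
        · intro q hq
          apply hball
          rw [← ball_prod_same]
          refine ⟨hq.1, ?_⟩
          rw [Real.ball_eq_Ioo]
          exact ⟨hq.2.1, lt_of_lt_of_le hq.2.2 (by linarith)⟩
        · intro x hx
          left
          apply hball
          rw [← ball_prod_same]
          refine ⟨hx, ?_⟩
          rw [Real.ball_eq_Ioo]
          exact ⟨by linarith, by linarith⟩
      · obtain ⟨r, hr, ε, hε, h1, h2⟩ := hplid
        refine ⟨r, hr, ε, hε, h1, ?_⟩
        intro x hx
        right
        have hdx : dist x pmax.1 < r := mem_ball.mp hx
        have hsub : ball x (r - dist x pmax.1) ⊆ ball pmax.1 r :=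
          ball_subset_ball' (by linarith)
        refine ⟨r - dist x pmax.1, by linarith, ε, hε, ?_, ?_⟩
        · intro q hq
          exact h1 ⟨hsub hq.1, hq.2⟩
        · apply Set.eq_empty_of_subset_empty
          intro q hq2
          rw [← h2]
          exact ⟨⟨hsub hq2.1.1, hq2.1.2⟩, hq2.2⟩
    -- slice setup
    set x₀ : Eucl n := pmax.1 with hx₀def
    set t : ℝ := pmax.2 with htdef
    set G : Eucl n → ℝ := fun x => v x t - w x t with hG
    set P : Fin n → Eucl n → ℝ := fun i x => dv x t i - dw x t i with hP
    set Q : Fin n → Fin n → Eucl n → ℝ := fun i j x => d2v x t i j - d2w x t i j with hQ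
    have hsliceC : Continuous (fun x : Eucl n => ((x, t) : Eucl n × ℝ)) :=
      continuous_id.prodMk continuous_const
    have hmapsto : Set.MapsTo (fun x : Eucl n => ((x, t) : Eucl n × ℝ))
        (ball x₀ r) (ω ∪ upperLid ω) := fun x hx => hslice x hx
    have hpartG : ∀ x ∈ ball x₀ r, ∀ i, HasDerivAt
        (fun s : ℝ => G (x + s • EuclideanSpace.single i (1:ℝ))) (P i x) 0 := by
      intro x hx i
      exact (hdv (x, t) (hslice x hx) i).sub (hdw (x, t) (hslice x hx) i)
    have hPcont : ∀ i, ContinuousOn (P i) (ball x₀ r) := by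
      intro i
      have h1 : ContinuousOn (fun x : Eucl n => dv x t i) (ball x₀ r) :=
        (hdv_cont i).comp hsliceC.continuousOn hmapsto
      have h2 : ContinuousOn (fun x : Eucl n => dw x t i) (ball x₀ r) :=
        (hdw_cont i).comp hsliceC.continuousOn hmapsto
      exact h1.sub h2
    have hQpart : ∀ x ∈ ball x₀ r, ∀ i j, HasDerivAt
        (fun s : ℝ => P i (x + s • EuclideanSpace.single j (1:ℝ))) (Q i j x) 0 := by
      intro x hx i j
      exact (hd2v (x, t) (hslice x hx) i j).sub (hd2w (x, t) (hslice x hx) i j)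
    have hQcont : ∀ i j, ContinuousOn (Q i j) (ball x₀ r) := by
      intro i j
      have h1 : ContinuousOn (fun x : Eucl n => d2v x t i j) (ball x₀ r) :=
        (hd2v_cont i j).comp hsliceC.continuousOn hmapsto
      have h2 : ContinuousOn (fun x : Eucl n => d2w x t i j) (ball x₀ r) :=
        (hd2w_cont i j).comp hsliceC.continuousOn hmapsto
      exact h1.sub h2
    have hmaxG : ∀ x ∈ ball x₀ r, G x ≤ G x₀ := by
      intro x hx
      have h1 : ((x, t) : Eucl n × ℝ) ∈ closure ω :=
        mem_closure_of_cyl hr hε hcyl (subset_closure hx)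
      have h2 : g (x, t) ≤ g pmax := hpmax h1
      simp only [hg, hG] at h2 ⊢
      linarith
    obtain ⟨hP0, hQneg, hQsym⟩ := second_order_test hr hpartG hPcont hQpart hQcont hmaxG
    -- matrix inequality
    have hupos : 0 < u x₀ t := hu_pos pmax hpm
    have htrace : ∑ i, ∑ j, a x₀ (u x₀ t) i j * Q i j x₀ ≤ 0 := by
      apply trace_nonpos
      · intro ξ hξ
        exact hell x₀ (u x₀ t) (ne_of_gt hupos) ξ hξ
      · exact hQneg
      · exact hQsym
    -- time derivative
    have hT : HasDerivAt (fun τ : ℝ => v x₀ τ - w x₀ τ - σ * τ)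
        (vt x₀ t - wt x₀ t - σ) t := by
      have h1 := (hvt pmax hpm).sub (hwt pmax hpm)
      have h2 : HasDerivAt (fun τ : ℝ => σ * τ) σ t := by
        simpa using (hasDerivAt_id t).const_mul σ
      exact h1.sub h2
    have htime : 0 ≤ vt x₀ t - wt x₀ t - σ := by
      apply deriv_nonneg_of_left_max hε hT
      intro τ hτ
      rcases eq_or_lt_of_le hτ.2 with heq | hlt
      · rw [heq]
      · have h1 : ((x₀, τ) : Eucl n × ℝ) ∈ ω := hcyl ⟨mem_ball_self hr, hτ.1, hlt⟩
        have h2 : g (x₀, τ) ≤ g pmax := hpmax (subset_closure h1)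
        simp only [hg] at h2
        exact h2
    -- gradient equality
    have hgrad : dv x₀ t = dw x₀ t :=
      eucl_ext (fun i => sub_eq_zero.mp (hP0 i))
    -- conclude
    have hm := hmain pmax hpm
    rw [show pmax = (x₀, t) from rfl] at hm
    simp only at hm
    rw [hgrad] at hm
    have h6 : ∑ i, ∑ j, a x₀ (u x₀ t) i j * Q i j x₀
        = (∑ i, ∑ j, a x₀ (u x₀ t) i j * d2v x₀ t i j)
          - (∑ i, ∑ j, a x₀ (u x₀ t) i j * d2w x₀ t i j) := by
      rw [← Finset.sum_sub_distrib]
      apply Finset.sum_congr rfl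
      intro i _
      rw [← Finset.sum_sub_distrib]
      apply Finset.sum_congr rfl
      intro j _
      simp only [hQ]
      ring
    rw [h6] at htrace
    linarith
  intro q hq
  have hqc : q ∈ closure ω := hlid_closure q hq
  have hq2 : 0 ≤ q.2 := hclT q hqc
  by_contra hlt
  push_neg at hlt
  set c := v q.1 q.2 - w q.1 q.2 with hc
  have hcpos : 0 < c := by simp only [hc]; linarith
  have hkey := key (c / (2 * (q.2 + 1))) (by positivity) q hqc
  have h2 : (c / (2 * (q.2 + 1))) * q.2 < c := by
    rw [div_mul_eq_mul_div, div_lt_iff₀ (by positivity)]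
    nlinarith
  simp only [← hc] at hkey
  linarith
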